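/- Let T be a bounded operator on a reproducing kernel Hilbert space and p ≥ 2. Then ber(T)^p ≤ (1/2) ber(|T|^p + |T*|^p). -/

import Mathlib

open scoped InnerProductSpace NNReal
open ContinuousLinearMap

variable {H : Type*} [NormedAddCommGroup H] [InnerProductSpace ℂ H] [CompleteSpace H]
variable {Ω : Type*}

/-- The modulus `|T| = (T*T)^{1/2}` of a bounded operator. -/
noncomputable def oabs (T : H →L[ℂ] H) : H →L[ℂ] H := CFC.sqrt (star T * T)

/-- The Berezin radius with respect to the family of normalized kernels `khat`. -/
noncomputable def ber (khat : Ω → H) (S : H →L[ℂ] H) : ℝ :=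
  ⨆ l : Ω, ‖⟪S (khat l), khat l⟫_ℂ‖

/-- Tangent line inequality for the convex function `t ↦ t ^ q`, `q ≥ 1`. -/
lemma tangent_ineq {l t q : ℝ} (hl : 0 < l) (ht : 0 ≤ t) (hq : 1 ≤ q) :
    (1 - q) * l ^ q + q * l ^ (q - 1) * t ≤ t ^ q := by
  have hs : (-1 : ℝ) ≤ t / l - 1 := by
    have : 0 ≤ t / l := div_nonneg ht hl.le
    linarith
  have hB := one_add_mul_self_le_rpow_one_add hs hq
  rw [add_sub_cancel] at hB
  have hlq : 0 < l ^ q := Real.rpow_pos_of_pos hl q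
  have h2 := mul_le_mul_of_nonneg_right hB hlq.le
  rw [Real.div_rpow ht hl.le, div_mul_cancel₀ _ hlq.ne'] at h2
  have hll : l ^ (q - 1) * l = l ^ q := by
    rw [← Real.rpow_add_one hl.ne' (q - 1)]
    norm_num
  have hexp : (1 + q * (t / l - 1)) * l ^ q = (1 - q) * l ^ q + q * l ^ (q - 1) * t := by
    rw [← hll]
    field_simp
    ring
  linarith [hexp ▸ h2]

lemma cfc_affine_le (A : H →L[ℂ] H) (hA : 0 ≤ A) (c d : ℝ) {q : ℝ} (hq : 1 ≤ q)
    (h : ∀ t : ℝ, 0 ≤ t → c + d * t ≤ t ^ q) :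
    c • (1 : H →L[ℂ] H) + d • A ≤ CFC.rpow A q := by
  have hsa : IsSelfAdjoint A := .of_nonneg hA
  have h1 : CFC.rpow A q
      = cfc (fun t : ℝ => ((t.toNNReal ^ q : ℝ≥0) : ℝ)) A := by
    show cfc (fun x : ℝ≥0 => x ^ q) A = _
    exact cfc_nnreal_eq_real _ _ hA
  have h2 : c • (1 : H →L[ℂ] H) + d • A = cfc (fun t : ℝ => c + d * t) A := by
    rw [cfc_add A (fun _ => c) (fun t => d * t), cfc_const c A, cfc_const_mul_id d A,
      Algebra.algebraMap_eq_smul_one]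
  have hcontg : ContinuousOn (fun t : ℝ => ((t.toNNReal ^ q : ℝ≥0) : ℝ)) (spectrum ℝ A) := by
    apply Continuous.continuousOn
    exact NNReal.continuous_coe.comp
      ((NNReal.continuous_rpow_const (by linarith)).comp continuous_real_toNNReal)
  rw [h1, h2, cfc_le_iff (fun t : ℝ => c + d * t) _ A (by fun_prop) hcontg hsa]
  intro t ht
  have ht0 : 0 ≤ t := spectrum_nonneg_of_nonneg hA ht
  have : ((t.toNNReal ^ q : ℝ≥0) : ℝ) = t ^ q := by
    rw [NNReal.coe_rpow, Real.coe_toNNReal t ht0]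
  rw [this]
  exact h t ht0

/-- McCarthy's inequality via the tangent line trick. -/
lemma mccarthy (A : H →L[ℂ] H) (hA : 0 ≤ A) {q : ℝ} (hq : 1 ≤ q) (x : H) (hx : ‖x‖ = 1) :
    (RCLike.re ⟪A x, x⟫_ℂ) ^ q ≤ RCLike.re ⟪CFC.rpow A q x, x⟫_ℂ := by
  set l : ℝ := RCLike.re ⟪A x, x⟫_ℂ with hldef
  have hl0 : 0 ≤ l := ((nonneg_iff_isPositive A).mp hA).re_inner_nonneg_left x
  rcases hl0.eq_or_lt with h0 | hpos
  · rw [← h0, Real.zero_rpow (by linarith)]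
    exact ((nonneg_iff_isPositive _).mp CFC.rpow_nonneg).re_inner_nonneg_left x
  · have hop := cfc_affine_le A hA ((1 - q) * l ^ q) (q * l ^ (q - 1)) hq
      (fun t ht => tangent_ineq hpos ht hq)
    rw [le_def] at hop
    have h3 := hop.re_inner_nonneg_left x
    have hll : l ^ (q - 1) * l = l ^ q := by
      rw [← Real.rpow_add_one hpos.ne' (q - 1)]
      norm_num
    have hxx : RCLike.re ⟪x, x⟫_ℂ = 1 := by
      rw [inner_self_eq_norm_sq, hx]; norm_num
    have hre : ∀ (r : ℝ) (y : H), RCLike.re ⟪(r : ℂ) • y, x⟫_ℂ = r * RCLike.re ⟪y, x⟫_ℂ := by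
      intro r y
      rw [inner_smul_left]
      simp [RCLike.conj_ofReal]
    have hexpand : RCLike.re ⟪(CFC.rpow A q - (((1 - q) * l ^ q) • (1 : H →L[ℂ] H)
        + (q * l ^ (q - 1)) • A)) x, x⟫_ℂ
        = RCLike.re ⟪CFC.rpow A q x, x⟫_ℂ - ((1 - q) * l ^ q) - (q * l ^ (q - 1)) * l := by
      have e1 : ((((1 - q) * l ^ q) • (1 : H →L[ℂ] H)) x) = (((1 - q) * l ^ q : ℝ) : ℂ) • x := by
        simp [RCLike.real_smul_eq_coe_smul (K := ℂ)]
      have e2 : (((q * l ^ (q - 1)) • A) x) = (((q * l ^ (q - 1) : ℝ)) : ℂ) • (A x) := by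
        simp [RCLike.real_smul_eq_coe_smul (K := ℂ)]
      rw [sub_apply, inner_sub_left, map_sub, add_apply, inner_add_left, map_add, e1, e2,
        hre, hre, hxx]
      ring_nf
      rw [← hldef]
    rw [hexpand] at h3
    have key : q * l ^ (q - 1) * l = q * l ^ q := by rw [mul_assoc, hll]
    linarith [h3, key]

/-- The pointwise estimate `|⟨Tx,x⟩|^p ≤ ⟨|T|^p x, x⟩` for a unit vector `x` and `p ≥ 2`. -/
lemma point_est (T : H →L[ℂ] H) {p : ℝ} (hp : 2 ≤ p) (x : H) (hx : ‖x‖ = 1) :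
    ‖⟪T x, x⟫_ℂ‖ ^ p ≤ RCLike.re ⟪CFC.rpow (oabs T) p x, x⟫_ℂ := by
  have hA : (0 : H →L[ℂ] H) ≤ star T * T := star_mul_self_nonneg T
  have hq : (1 : ℝ) ≤ p / 2 := by linarith
  have h1 : ‖⟪T x, x⟫_ℂ‖ ≤ ‖T x‖ := by
    calc ‖⟪T x, x⟫_ℂ‖ ≤ ‖T x‖ * ‖x‖ := norm_inner_le_norm _ _
    _ = ‖T x‖ := by rw [hx, mul_one]
  have h2 : RCLike.re ⟪(star T * T) x, x⟫_ℂ = ‖T x‖ ^ 2 := by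
    rw [ContinuousLinearMap.mul_apply, star_eq_adjoint, adjoint_inner_left, inner_self_eq_norm_sq]
  have h3 : CFC.rpow (oabs T) p = CFC.rpow (star T * T) (p / 2) := by
    have h := CFC.rpow_sqrt_nnreal (a := star T * T) (x := p.toNNReal) hA
    rw [Real.coe_toNNReal p (by linarith)] at h
    exact h
  have hmc := mccarthy (star T * T) hA hq x hx
  have hchain : ‖⟪T x, x⟫_ℂ‖ ^ p ≤ (RCLike.re ⟪(star T * T) x, x⟫_ℂ) ^ (p / 2) := by
    calc ‖⟪T x, x⟫_ℂ‖ ^ p ≤ ‖T x‖ ^ p :=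
          Real.rpow_le_rpow (norm_nonneg _) h1 (by linarith)
    _ = (‖T x‖ ^ 2) ^ (p / 2) := by
          rw [← Real.rpow_natCast ‖T x‖ 2, ← Real.rpow_mul (norm_nonneg _),
            show ((2:ℕ):ℝ) * (p / 2) = p by push_cast; ring]
    _ = (RCLike.re ⟪(star T * T) x, x⟫_ℂ) ^ (p / 2) := by rw [h2]
  rw [h3]
  exact hchain.trans hmc

/-- For `p ≥ 2`, `ber(T)^p ≤ (1/2) ber(|T|^p + |T*|^p)`. -/
theorem stmt_9 [Nonempty Ω] (khat : Ω → H) (hk : ∀ l : Ω, ‖khat l‖ = 1)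
    (T : H →L[ℂ] H) (p : ℝ) (hp : 2 ≤ p) :
    (ber khat T) ^ p ≤
      (1 / 2) * ber khat (CFC.rpow (oabs T) p + CFC.rpow (oabs (star T)) p) := by
  set S : H →L[ℂ] H := CFC.rpow (oabs T) p + CFC.rpow (oabs (star T)) p with hS
  have hp0 : (0 : ℝ) < p := by linarith
  have hMnn : 0 ≤ ber khat S := Real.iSup_nonneg fun l => norm_nonneg _
  have hbdd : BddAbove (Set.range fun l : Ω => ‖⟪S (khat l), khat l⟫_ℂ‖) := by
    refine ⟨‖S‖, ?_⟩
    rintro - ⟨l, rfl⟩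
    calc ‖⟪S (khat l), khat l⟫_ℂ‖ ≤ ‖S (khat l)‖ * ‖khat l‖ := norm_inner_le_norm _ _
    _ ≤ (‖S‖ * ‖khat l‖) * ‖khat l‖ := by
        gcongr; exact S.le_opNorm _
    _ = ‖S‖ := by rw [hk l]; ring
  have hpoint : ∀ l : Ω, ‖⟪T (khat l), khat l⟫_ℂ‖ ^ p ≤ (1 / 2) * ber khat S := by
    intro l
    set x : H := khat l
    have e1 := point_est T hp x (hk l)
    have e2' := point_est (star T) hp x (hk l)
    have enorm : ‖⟪(star T) x, x⟫_ℂ‖ = ‖⟪T x, x⟫_ℂ‖ := by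
      rw [star_eq_adjoint, adjoint_inner_left, norm_inner_symm]
    rw [enorm] at e2'
    have esum : 2 * ‖⟪T x, x⟫_ℂ‖ ^ p ≤ RCLike.re ⟪S x, x⟫_ℂ := by
      have : RCLike.re ⟪S x, x⟫_ℂ = RCLike.re ⟪CFC.rpow (oabs T) p x, x⟫_ℂ
          + RCLike.re ⟪CFC.rpow (oabs (star T)) p x, x⟫_ℂ := by
        rw [hS, add_apply, inner_add_left, map_add]
      rw [this]; linarith
    have hre : RCLike.re ⟪S x, x⟫_ℂ ≤ ‖⟪S x, x⟫_ℂ‖ := RCLike.re_le_norm _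
    have hsup : ‖⟪S x, x⟫_ℂ‖ ≤ ber khat S := le_ciSup hbdd l
    linarith
  have hberT : ber khat T ≤ ((1 / 2) * ber khat S) ^ p⁻¹ := by
    refine ciSup_le fun l => ?_
    calc ‖⟪T (khat l), khat l⟫_ℂ‖
        = (‖⟪T (khat l), khat l⟫_ℂ‖ ^ p) ^ p⁻¹ :=
          (Real.rpow_rpow_inv (norm_nonneg _) hp0.ne').symm
    _ ≤ ((1 / 2) * ber khat S) ^ p⁻¹ :=
          Real.rpow_le_rpow (Real.rpow_nonneg (norm_nonneg _) p) (hpoint l)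
            (inv_nonneg.mpr hp0.le)
  have hberTnn : 0 ≤ ber khat T := Real.iSup_nonneg fun l => norm_nonneg _
  calc (ber khat T) ^ p ≤ (((1 / 2) * ber khat S) ^ p⁻¹) ^ p :=
        Real.rpow_le_rpow hberTnn hberT hp0.le
  _ = (1 / 2) * ber khat S := Real.rpow_inv_rpow (by positivity) hp0.ne'
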